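/- Let S be a hypersurface in M and f ∈ End(M,S) tangential with X_f ≢ 0, S^0 = S \ Sing(X_f), and Q_f = T_S / X_f(N_S^{⊗ν_f}) with projection π_f: T_S → Q_f. Then B̃(s)(u) = π_f([X_f(u), s̃]), for s̃ ∈ T_S with π_f(s̃) = s, is well-defined (independent of the lift s̃) and is a holomorphic action of N_S^{⊗ν_f} on the virtual bundle TS − N_S^{⊗ν_f} along X_f (a Baum-Bott action). -/

import Mathlib

open Filter Topology

abbrev Esp (n : ℕ) := Fin n → ℂ

/-- Lie bracket of two vector fields on `ℂ^n`. -/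
noncomputable def lieB {n : ℕ} (V W : Esp n → Esp n) (x : Esp n) : Esp n :=
  fderiv ℂ W x (V x) - fderiv ℂ V x (W x)

/-!
STATEMENT 13.  `S = {z^1 = 0}` is a hypersurface pointwise fixed by the tangential map
`f ≢ id`, `f^j − z^j = g^j (z^1)^ν` (`hfg`), `g^1 = z^1·h^1` (`htang`), with
`X_f ≢ 0` (`hXne`).  The canonical section, viewed as a morphism
`X_f : N_S^{⊗ν} → TS`, sends the section `u·∂_1^{⊗ν}` to the tangent field
`u·G`, `G = (g^j)_j|_S` (tangent to `S` by tangentiality).  `Q_f = T_S/X_f(N_S^{⊗ν})`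
with projection `π_f`, so sections of `Q_f` are tangent fields `Z` modulo the image
fields `ρ·G`.  For `B̃(s)(u) = π_f([X_f(u), s̃])` the conclusions are:
(1) well-definedness: if `s̃ = Z` and `ŝ = Z'` are two lifts of the same section `s` of
`Q_f`, i.e. `Z − Z' = ρ·G`, then the brackets `[X_f(u), Z]` and `[X_f(u), Z']` differ
by a section of the image, pointwise a multiple of `G`, on `S⁰ = S \ Sing(X_f)`;
(2) the Leibniz rule modulo the image: `B̃(G_0·s)(u) = X^#(G_0)(u)·s + G_0·B̃(s)(u)`,
i.e. `[X_f(u), G_0·Z] − dG_0(X_f(u))·Z − G_0·[X_f(u), Z]` is pointwise a multiple of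
`G` on `S⁰`.  Hence `B̃` is a holomorphic (Baum–Bott) action of `N_S^{⊗ν_f}` on the
virtual bundle `TS − N_S^{⊗ν_f}` along `X_f`.
-/
theorem statement_13 {n : ℕ} [NeZero n] (hn : 2 ≤ n) (ν : ℕ) (hν : 1 ≤ ν)
    (U : Set (Esp n)) (hU : IsOpen U)
    (f : Esp n → Esp n) (hfa : AnalyticOnNhd ℂ f U)
    (hfix : ∀ x ∈ U, x 0 = 0 → f x = x)
    (g : Fin n → Esp n → ℂ) (h : Esp n → ℂ)
    (hga : ∀ j, AnalyticOnNhd ℂ (g j) U) (hha : AnalyticOnNhd ℂ h U)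
    (hfg : ∀ x ∈ U, ∀ j : Fin n, f x j - x j = g j x * (x 0) ^ ν)
    (htang : ∀ x ∈ U, g 0 x = x 0 * h x)
    (hXne : ∃ x ∈ U, x 0 = 0 ∧ ∃ j, g j x ≠ 0) :
    -- (1) the bracket is well defined on sections of `Q_f = T_S/X_f(N_S^{⊗ν})`:
    (∀ (u ρ : Esp n → ℂ) (Z Z' : Esp n → Esp n),
      AnalyticOnNhd ℂ u U → AnalyticOnNhd ℂ ρ U →
      AnalyticOnNhd ℂ Z U → AnalyticOnNhd ℂ Z' U →
      (∀ x ∈ U, x 0 = 0 → Z x 0 = 0) → (∀ x ∈ U, x 0 = 0 → Z' x 0 = 0) →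
      (∀ x ∈ U, Z x - Z' x = ρ x • (fun j => g j x)) →
      ∀ x ∈ U, x 0 = 0 → (∃ j, g j x ≠ 0) →
        ∃ c : ℂ,
          lieB (fun y => u y • (fun j => g j y)) Z x -
            lieB (fun y => u y • (fun j => g j y)) Z' x = c • (fun j => g j x)) ∧
    -- (2) the Leibniz rule modulo the image:
    (∀ (u G₀ : Esp n → ℂ) (Z : Esp n → Esp n),
      AnalyticOnNhd ℂ u U → AnalyticOnNhd ℂ G₀ U → AnalyticOnNhd ℂ Z U →
      (∀ x ∈ U, x 0 = 0 → Z x 0 = 0) →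
      ∀ x ∈ U, x 0 = 0 → (∃ j, g j x ≠ 0) →
        ∃ c : ℂ,
          lieB (fun y => u y • (fun j => g j y)) (fun y => G₀ y • Z y) x -
            (fderiv ℂ G₀ x (u x • (fun j => g j x))) • Z x -
            G₀ x • lieB (fun y => u y • (fun j => g j y)) Z x = c • (fun j => g j x)) := by
  constructor
  · intro u ρ Z Z' hu hρ hZa hZ'a _ _ hdiff x hx _ _
    set G : Esp n → Esp n := fun y j => g j y with hGdef
    have hxU : U ∈ 𝓝 x := hU.mem_nhds hx
    have hGd : DifferentiableAt ℂ G x :=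
      differentiableAt_pi.2 fun j => ((hga j) x hx).differentiableAt
    have hud : DifferentiableAt ℂ u x := (hu x hx).differentiableAt
    have hρd : DifferentiableAt ℂ ρ x := (hρ x hx).differentiableAt
    have hZ'd : DifferentiableAt ℂ Z' x := (hZ'a x hx).differentiableAt
    have hρGd : DifferentiableAt ℂ (fun y => ρ y • G y) x := hρd.smul hGd
    have hZeq : Z =ᶠ[𝓝 x] fun y => Z' y + ρ y • G y := by
      filter_upwards [hxU] with y hy
      exact sub_eq_iff_eq_add'.mp (hdiff y hy)
    have hfZ : fderiv ℂ Z x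
        = fderiv ℂ Z' x + (ρ x • fderiv ℂ G x + (fderiv ℂ ρ x).smulRight (G x)) := by
      rw [hZeq.fderiv_eq, fderiv_fun_add hZ'd hρGd, fderiv_fun_smul hρd hGd]
    have hfV : fderiv ℂ (fun y => u y • G y) x
        = u x • fderiv ℂ G x + (fderiv ℂ u x).smulRight (G x) := fderiv_smul hud hGd
    have hZx : Z x = Z' x + ρ x • G x := sub_eq_iff_eq_add'.mp (hdiff x hx)
    refine ⟨fderiv ℂ ρ x (u x • G x) - ρ x * fderiv ℂ u x (G x), ?_⟩
    have keyeq : lieB (fun y => u y • G y) Z x - lieB (fun y => u y • G y) Z' x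
        = (fderiv ℂ ρ x (u x • G x) - ρ x * fderiv ℂ u x (G x)) • (G x) := by
      simp only [lieB, hfZ, hfV, hZx, ContinuousLinearMap.add_apply,
        ContinuousLinearMap.smul_apply, ContinuousLinearMap.smulRight_apply,
        map_add, map_smul, smul_eq_mul, sub_smul, smul_smul]
      module
    exact keyeq
  · intro u G₀ Z hu hG₀ hZa _ x hx _ _
    set G : Esp n → Esp n := fun y j => g j y with hGdef
    have hGd : DifferentiableAt ℂ G x :=
      differentiableAt_pi.2 fun j => ((hga j) x hx).differentiableAt
    have hud : DifferentiableAt ℂ u x := (hu x hx).differentiableAt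
    have hG₀d : DifferentiableAt ℂ G₀ x := (hG₀ x hx).differentiableAt
    have hZd : DifferentiableAt ℂ Z x := (hZa x hx).differentiableAt
    have hfW : fderiv ℂ (fun y => G₀ y • Z y) x
        = G₀ x • fderiv ℂ Z x + (fderiv ℂ G₀ x).smulRight (Z x) := fderiv_smul hG₀d hZd
    refine ⟨0, ?_⟩
    have keyeq : lieB (fun y => u y • G y) (fun y => G₀ y • Z y) x -
        (fderiv ℂ G₀ x (u x • G x)) • Z x -
        G₀ x • lieB (fun y => u y • G y) Z x = (0 : ℂ) • (G x) := by
      simp only [lieB, hfW, ContinuousLinearMap.add_apply,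
        ContinuousLinearMap.smul_apply, ContinuousLinearMap.smulRight_apply,
        map_add, map_smul, smul_eq_mul, sub_smul, smul_smul, smul_sub]
      module
    exact keyeq
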